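/- Let u ∈ ℝ^N be a unit vector, P = u uᵀ, and suppose there is a constant C > 0 such that for every column i of a positive matrix X^{(l)} ∈ ℝ_{>0}^{N×d}, ‖X^{(l)}_{:,i} − P X^{(l)}_{:,i}‖₂ ≤ C ‖P X^{(l)}_{:,i}‖₂ (e^{d_H(X^{(l)}_{:,i}, u)} − 1). If max_i d_H(X^{(l)}_{:,i}, u) → 0 as l → ∞, then ‖(I−P)X^{(l)}‖_F / ‖P X^{(l)}‖_F → 0 and consequently NumRank(X^{(l)}) → 1. -/

import Mathlib

open scoped BigOperators

noncomputable def vecNorm {n : ℕ} (v : Fin n → ℝ) : ℝ := Real.sqrt (∑ i, v i ^ 2)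

noncomputable def frobNorm {N d : ℕ} (X : Matrix (Fin N) (Fin d) ℝ) : ℝ :=
  Real.sqrt (∑ i, ∑ j, X i j ^ 2)

noncomputable def specNorm {N d : ℕ} (X : Matrix (Fin N) (Fin d) ℝ) : ℝ :=
  sSup {c : ℝ | ∃ v : Fin d → ℝ, vecNorm v ≤ 1 ∧ c = vecNorm (X.mulVec v)}

noncomputable def numRank {N d : ℕ} (X : Matrix (Fin N) (Fin d) ℝ) : ℝ :=
  frobNorm X ^ 2 / specNorm X ^ 2

def frobInner {N d : ℕ} (A B : Matrix (Fin N) (Fin d) ℝ) : ℝ := ∑ i, ∑ j, A i j * B i j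

/-- Hilbert projective distance on the open positive cone. -/
noncomputable def dH {n : ℕ} (x y : Fin n → ℝ) : ℝ :=
  Real.log ((⨆ i, x i / y i) / (⨅ i, x i / y i))

/-- Apply a map `σ : ℝ^N → ℝ^N` to each column of a matrix. -/
def colApply {N d : ℕ} (σ : (Fin N → ℝ) → (Fin N → ℝ)) (M : Matrix (Fin N) (Fin d) ℝ) :
    Matrix (Fin N) (Fin d) ℝ := Matrix.of fun i j => σ (fun k => M k j) i

lemma vecNorm_nonneg' {n : ℕ} (v : Fin n → ℝ) : 0 ≤ vecNorm v := Real.sqrt_nonneg _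

lemma vecNorm_sq' {n : ℕ} (v : Fin n → ℝ) : vecNorm v ^ 2 = ∑ i, v i ^ 2 :=
  Real.sq_sqrt (Finset.sum_nonneg fun i _ => sq_nonneg _)

lemma frobNorm_nonneg' {N d : ℕ} (X : Matrix (Fin N) (Fin d) ℝ) : 0 ≤ frobNorm X :=
  Real.sqrt_nonneg _

lemma frobNorm_sq' {N d : ℕ} (X : Matrix (Fin N) (Fin d) ℝ) :
    frobNorm X ^ 2 = ∑ i, ∑ j, X i j ^ 2 :=
  Real.sq_sqrt (Finset.sum_nonneg fun i _ => Finset.sum_nonneg fun j _ => sq_nonneg _)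

lemma frobNorm_sq_cols {N d : ℕ} (M : Matrix (Fin N) (Fin d) ℝ) :
    frobNorm M ^ 2 = ∑ j, vecNorm (fun i => M i j) ^ 2 := by
  rw [frobNorm_sq', Finset.sum_comm]
  exact Finset.sum_congr rfl fun j _ => (vecNorm_sq' _).symm

lemma vecNorm_mulVec_le {N d : ℕ} (X : Matrix (Fin N) (Fin d) ℝ) (v : Fin d → ℝ) :
    vecNorm (X.mulVec v) ≤ frobNorm X * vecNorm v := by
  have h : ∑ i, (X.mulVec v) i ^ 2 ≤ (∑ i, ∑ j, X i j ^ 2) * ∑ j, v j ^ 2 := by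
    rw [Finset.sum_mul]
    refine Finset.sum_le_sum fun i _ => ?_
    simp only [Matrix.mulVec, dotProduct]
    exact Finset.sum_mul_sq_le_sq_mul_sq Finset.univ (fun j => X i j) v
  calc vecNorm (X.mulVec v) = Real.sqrt (∑ i, (X.mulVec v) i ^ 2) := rfl
    _ ≤ Real.sqrt ((∑ i, ∑ j, X i j ^ 2) * ∑ j, v j ^ 2) := Real.sqrt_le_sqrt h
    _ = frobNorm X * vecNorm v := Real.sqrt_mul
        (Finset.sum_nonneg fun i _ => Finset.sum_nonneg fun j _ => sq_nonneg _) _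

lemma specNorm_bddAbove {N d : ℕ} (X : Matrix (Fin N) (Fin d) ℝ) :
    BddAbove {c : ℝ | ∃ v : Fin d → ℝ, vecNorm v ≤ 1 ∧ c = vecNorm (X.mulVec v)} := by
  refine ⟨frobNorm X, ?_⟩
  rintro b ⟨v, hv, rfl⟩
  calc vecNorm (X.mulVec v) ≤ frobNorm X * vecNorm v := vecNorm_mulVec_le X v
    _ ≤ frobNorm X * 1 := mul_le_mul_of_nonneg_left hv (frobNorm_nonneg' X)
    _ = frobNorm X := mul_one _

lemma specNorm_le_frobNorm {N d : ℕ} (X : Matrix (Fin N) (Fin d) ℝ) :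
    specNorm X ≤ frobNorm X := by
  apply csSup_le
  · exact ⟨vecNorm (X.mulVec 0), 0, by simp [vecNorm], rfl⟩
  · rintro b ⟨v, hv, rfl⟩
    calc vecNorm (X.mulVec v) ≤ frobNorm X * vecNorm v := vecNorm_mulVec_le X v
      _ ≤ frobNorm X * 1 := mul_le_mul_of_nonneg_left hv (frobNorm_nonneg' X)
      _ = frobNorm X := mul_one _

lemma dot_le_vecNorm {N : ℕ} (u y : Fin N → ℝ) (hsum : ∑ i, u i ^ 2 = 1) :
    ∑ i, u i * y i ≤ vecNorm y := by
  have h := Finset.sum_mul_sq_le_sq_mul_sq Finset.univ u y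
  rw [hsum, one_mul] at h
  calc ∑ i, u i * y i ≤ |∑ i, u i * y i| := le_abs_self _
    _ = Real.sqrt ((∑ i, u i * y i) ^ 2) := (Real.sqrt_sq_eq_abs _).symm
    _ ≤ Real.sqrt (∑ i, y i ^ 2) := Real.sqrt_le_sqrt h
    _ = vecNorm y := rfl

/-- If the columnwise bound `‖(I-P)X_{:,i}‖ ≤ C ‖P X_{:,i}‖ (e^{d_H(X_{:,i},u)} - 1)` holds and
`max_i d_H(X^{(l)}_{:,i}, u) → 0`, then `‖(I-P)X^{(l)}‖_F / ‖P X^{(l)}‖_F → 0` and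
`NumRank(X^{(l)}) → 1`. -/
theorem stmt19 {N d : ℕ} (hN : 0 < N) (hd : 0 < d)
    (u : Fin N → ℝ) (hu : ∀ i, 0 < u i) (hunorm : vecNorm u = 1)
    (X : ℕ → Matrix (Fin N) (Fin d) ℝ) (hX : ∀ l i j, 0 < X l i j)
    (C : ℝ) (hC : 0 < C)
    (hbound : ∀ l (j : Fin d),
      vecNorm ((fun k => X l k j) - (Matrix.vecMulVec u u).mulVec fun k => X l k j) ≤
        C * vecNorm ((Matrix.vecMulVec u u).mulVec fun k => X l k j) *
          (Real.exp (dH (fun k => X l k j) u) - 1))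
    (hdh : Filter.Tendsto
      (fun l => Finset.univ.sup' (Finset.univ_nonempty_iff.mpr (Fin.pos_iff_nonempty.mp hd))
        fun j : Fin d => dH (fun k => X l k j) u) Filter.atTop (nhds 0)) :
    Filter.Tendsto
      (fun l => frobNorm ((1 - Matrix.vecMulVec u u) * X l) /
        frobNorm (Matrix.vecMulVec u u * X l)) Filter.atTop (nhds 0) ∧
    Filter.Tendsto (fun l => numRank (X l)) Filter.atTop (nhds 1) := by
  have hneN : (Finset.univ : Finset (Fin N)).Nonempty :=
    Finset.univ_nonempty_iff.mpr (Fin.pos_iff_nonempty.mp hN)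
  have hne : (Finset.univ : Finset (Fin d)).Nonempty :=
    Finset.univ_nonempty_iff.mpr (Fin.pos_iff_nonempty.mp hd)
  set P := Matrix.vecMulVec u u with hP
  have hsum : ∑ i, u i ^ 2 = 1 := Real.sqrt_eq_one.mp hunorm
  set c : ℕ → Fin d → ℝ := fun l j => ∑ k, u k * X l k j with hcdef
  have hcval : ∀ l j, c l j = ∑ k, u k * X l k j := fun l j => rfl
  have hcpos : ∀ l j, 0 < c l j := fun l j =>
    Finset.sum_pos (fun k _ => mul_pos (hu k) (hX l k j)) hneN
  have hPcol : ∀ l j, P.mulVec (fun k => X l k j) = fun i => u i * c l j := by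
    intro l j; funext i
    simp [hP, Matrix.mulVec, dotProduct, Matrix.vecMulVec_apply, hcval,
      Finset.mul_sum, mul_assoc]
  have hPXentry : ∀ l i j, (P * X l) i j = u i * c l j := by
    intro l i j
    simp [hP, Matrix.mul_apply, Matrix.vecMulVec_apply, hcval, Finset.mul_sum, mul_assoc]
  have hIPentry : ∀ l i j, (((1 : Matrix (Fin N) (Fin N) ℝ) - P) * X l) i j = X l i j - u i * c l j := by
    intro l i j
    rw [Matrix.sub_mul, Matrix.one_mul, Matrix.sub_apply, hPXentry]
  have hnormPcol : ∀ l j, vecNorm (P.mulVec (fun k => X l k j)) = c l j := by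
    intro l j
    rw [hPcol]
    have h1 : ∑ i, (u i * c l j) ^ 2 = c l j ^ 2 := by
      simp only [mul_pow, ← Finset.sum_mul, hsum, one_mul]
    show Real.sqrt (∑ i, (u i * c l j) ^ 2) = c l j
    rw [h1, Real.sqrt_sq (hcpos l j).le]
  have hfrobPX_sq : ∀ l, frobNorm (P * X l) ^ 2 = ∑ j, c l j ^ 2 := by
    intro l
    rw [frobNorm_sq']
    calc ∑ i, ∑ j, (P * X l) i j ^ 2 = ∑ i, ∑ j, u i ^ 2 * c l j ^ 2 :=
          Finset.sum_congr rfl fun i _ => Finset.sum_congr rfl fun j _ => by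
            rw [hPXentry, mul_pow]
      _ = (∑ i, u i ^ 2) * ∑ j, c l j ^ 2 := by
          rw [Finset.sum_mul]
          exact Finset.sum_congr rfl fun i _ => (Finset.mul_sum _ _ _).symm
      _ = ∑ j, c l j ^ 2 := by rw [hsum, one_mul]
  have hfrobPX_pos : ∀ l, 0 < frobNorm (P * X l) := by
    intro l
    apply Real.sqrt_pos.mpr
    refine Finset.sum_pos (fun i _ => Finset.sum_pos (fun j _ => ?_) hne) hneN
    rw [hPXentry]
    exact pow_pos (mul_pos (hu i) (hcpos l j)) 2
  -- Pythagoras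
  have hcol_pyth : ∀ l j, ∑ i, X l i j ^ 2
      = ∑ i, (u i * c l j) ^ 2 + ∑ i, (X l i j - u i * c l j) ^ 2 := by
    intro l j
    have h1 : ∑ i, (u i * c l j) ^ 2 = c l j ^ 2 := by
      simp only [mul_pow, ← Finset.sum_mul, hsum, one_mul]
    have expand : ∀ i ∈ Finset.univ, (X l i j - u i * c l j) ^ 2
        = (X l i j ^ 2 + c l j ^ 2 * u i ^ 2) - 2 * c l j * (u i * X l i j) :=
      fun i _ => by ring
    have h2 : ∑ i, (X l i j - u i * c l j) ^ 2 = ∑ i, X l i j ^ 2 - c l j ^ 2 := by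
      rw [Finset.sum_congr rfl expand, Finset.sum_sub_distrib, Finset.sum_add_distrib,
        ← Finset.mul_sum, ← Finset.mul_sum, hsum, ← hcval]
      ring
    rw [h1, h2]; ring
  have hpyth : ∀ l, frobNorm (X l) ^ 2
      = frobNorm (P * X l) ^ 2 + frobNorm ((1 - P) * X l) ^ 2 := by
    intro l
    have e1 : frobNorm (X l) ^ 2 = ∑ j, ∑ i, X l i j ^ 2 := by
      rw [frobNorm_sq']; exact Finset.sum_comm
    have e2 : frobNorm (P * X l) ^ 2 = ∑ j, ∑ i, (u i * c l j) ^ 2 := by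
      rw [frobNorm_sq', Finset.sum_comm]
      exact Finset.sum_congr rfl fun j _ => Finset.sum_congr rfl fun i _ => by rw [hPXentry]
    have e3 : frobNorm ((1 - P) * X l) ^ 2 = ∑ j, ∑ i, (X l i j - u i * c l j) ^ 2 := by
      rw [frobNorm_sq', Finset.sum_comm]
      exact Finset.sum_congr rfl fun j _ => Finset.sum_congr rfl fun i _ => by rw [hIPentry]
    rw [e1, e2, e3, ← Finset.sum_add_distrib]
    exact Finset.sum_congr rfl fun j _ => hcol_pyth l j
  -- columns of (1-P)X
  have hIPcol : ∀ l j, (fun i => (((1 : Matrix (Fin N) (Fin N) ℝ) - P) * X l) i j)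
      = ((fun k => X l k j) - P.mulVec fun k => X l k j) := by
    intro l j; funext i
    rw [hIPentry, Pi.sub_apply, hPcol]
  have hPcolpos : ∀ l j, 0 < vecNorm (P.mulVec fun k => X l k j) := by
    intro l j; rw [hnormPcol]; exact hcpos l j
  have hdhexp : ∀ l j, 0 ≤ Real.exp (dH (fun k => X l k j) u) - 1 := by
    intro l j
    have h0 := (vecNorm_nonneg' _).trans (hbound l j)
    nlinarith [mul_pos hC (hPcolpos l j)]
  set M := fun l => Finset.univ.sup' (Finset.univ_nonempty_iff.mpr (Fin.pos_iff_nonempty.mp hd))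
      (fun j : Fin d => dH (fun k => X l k j) u) with hMdef
  have hM_ge : ∀ l j, dH (fun k => X l k j) u ≤ M l := fun l j =>
    Finset.le_sup' (fun j : Fin d => dH (fun k => X l k j) u) (Finset.mem_univ j)
  have heM : ∀ l, 0 ≤ Real.exp (M l) - 1 := by
    intro l
    have h1 := hdhexp l ⟨0, hd⟩
    have h2 := Real.exp_le_exp.mpr (hM_ge l ⟨0, hd⟩)
    linarith
  -- key Frobenius bound
  have hkey : ∀ l, frobNorm ((1 - P) * X l) ≤ C * (Real.exp (M l) - 1) * frobNorm (P * X l) := by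
    intro l
    have hb : 0 ≤ C * (Real.exp (M l) - 1) * frobNorm (P * X l) :=
      mul_nonneg (mul_nonneg hC.le (heM l)) (hfrobPX_pos l).le
    have hsq : frobNorm ((1 - P) * X l) ^ 2
        ≤ (C * (Real.exp (M l) - 1)) ^ 2 * frobNorm (P * X l) ^ 2 := by
      rw [frobNorm_sq_cols, hfrobPX_sq l, Finset.mul_sum]
      refine Finset.sum_le_sum fun j _ => ?_
      rw [hIPcol l j]
      have h1 := hbound l j
      have h2 : C * vecNorm (P.mulVec fun k => X l k j)
            * (Real.exp (dH (fun k => X l k j) u) - 1)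
          ≤ C * (Real.exp (M l) - 1) * c l j := by
        rw [hnormPcol]
        have h3 := Real.exp_le_exp.mpr (hM_ge l j)
        nlinarith [mul_pos hC (hcpos l j), hdhexp l j]
      have h4 := vecNorm_nonneg'
        ((fun k => X l k j) - P.mulVec fun k => X l k j)
      calc vecNorm ((fun k => X l k j) - P.mulVec fun k => X l k j) ^ 2
          ≤ (C * (Real.exp (M l) - 1) * c l j) ^ 2 := pow_le_pow_left₀ h4 (h1.trans h2) 2
        _ = (C * (Real.exp (M l) - 1)) ^ 2 * c l j ^ 2 := by ring
    calc frobNorm ((1 - P) * X l)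
        = Real.sqrt (frobNorm ((1 - P) * X l) ^ 2) := (Real.sqrt_sq (frobNorm_nonneg' _)).symm
      _ ≤ Real.sqrt ((C * (Real.exp (M l) - 1)) ^ 2 * frobNorm (P * X l) ^ 2) :=
          Real.sqrt_le_sqrt hsq
      _ = C * (Real.exp (M l) - 1) * frobNorm (P * X l) := by
          rw [← mul_pow, Real.sqrt_sq hb]
  set r := fun l => frobNorm ((1 - P) * X l) / frobNorm (P * X l) with hrdef
  have hr0 : ∀ l, 0 ≤ r l := fun l => div_nonneg (frobNorm_nonneg' _) (hfrobPX_pos l).le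
  have hrB : ∀ l, r l ≤ C * (Real.exp (M l) - 1) := fun l =>
    (div_le_iff₀ (hfrobPX_pos l)).mpr (hkey l)
  have hB : Filter.Tendsto (fun l => C * (Real.exp (M l) - 1)) Filter.atTop (nhds 0) := by
    have h1 : Filter.Tendsto (fun l => Real.exp (M l)) Filter.atTop (nhds 1) := by
      have := (Real.continuous_exp.tendsto 0).comp hdh
      simpa [Function.comp_def] using this
    have h2 := (h1.sub_const 1).const_mul C
    simpa using h2
  have hrT : Filter.Tendsto r Filter.atTop (nhds 0) :=
    tendsto_of_tendsto_of_tendsto_of_le_of_le tendsto_const_nhds hB hr0 hrB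
  refine ⟨hrT, ?_⟩
  -- spectral norm bounds
  have hfrobPX_le_spec : ∀ l, frobNorm (P * X l) ≤ specNorm (X l) := by
    intro l
    set F := frobNorm (P * X l) with hF
    have hFpos : 0 < F := hfrobPX_pos l
    set w : Fin d → ℝ := fun j => c l j / F with hw
    have hwval : ∀ j, w j = c l j / F := fun j => rfl
    have hwsum : ∑ j, w j ^ 2 = 1 := by
      have : ∑ j, w j ^ 2 = (∑ j, c l j ^ 2) / F ^ 2 := by
        rw [Finset.sum_div]
        exact Finset.sum_congr rfl fun j _ => by rw [hwval, div_pow]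
      rw [this, ← hfrobPX_sq l, ← hF, div_self (pow_ne_zero 2 hFpos.ne')]
    have hwnorm : vecNorm w = 1 := by
      show Real.sqrt (∑ j, w j ^ 2) = 1
      rw [hwsum, Real.sqrt_one]
    have hdot : ∑ i, u i * (X l).mulVec w i = F := by
      have e1 : ∑ i, u i * (X l).mulVec w i = ∑ j, w j * c l j := by
        simp only [Matrix.mulVec, dotProduct, Finset.mul_sum]
        rw [Finset.sum_comm]
        refine Finset.sum_congr rfl fun j _ => ?_
        rw [hcval, Finset.mul_sum]
        exact Finset.sum_congr rfl fun i _ => by ring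
      have e2 : ∑ j, w j * c l j = (∑ j, c l j ^ 2) / F := by
        rw [Finset.sum_div]
        exact Finset.sum_congr rfl fun j _ => by rw [hwval]; ring
      rw [e1, e2, ← hfrobPX_sq l, ← hF, sq, mul_div_assoc, div_self hFpos.ne', mul_one]
    have hmem : vecNorm ((X l).mulVec w)
        ∈ {c : ℝ | ∃ v : Fin d → ℝ, vecNorm v ≤ 1 ∧ c = vecNorm ((X l).mulVec v)} :=
      ⟨w, hwnorm.le, rfl⟩
    calc F = ∑ i, u i * (X l).mulVec w i := hdot.symm
      _ ≤ vecNorm ((X l).mulVec w) := dot_le_vecNorm u _ hsum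
      _ ≤ specNorm (X l) := le_csSup (specNorm_bddAbove (X l)) hmem
  have hspec_pos : ∀ l, 0 < specNorm (X l) := fun l =>
    (hfrobPX_pos l).trans_le (hfrobPX_le_spec l)
  have h1le : ∀ l, 1 ≤ numRank (X l) := by
    intro l
    rw [numRank, one_le_div (pow_pos (hspec_pos l) 2)]
    exact pow_le_pow_left₀ (hspec_pos l).le (specNorm_le_frobNorm (X l)) 2
  have hub : ∀ l, numRank (X l) ≤ 1 + r l ^ 2 := by
    intro l
    have step1 : numRank (X l) ≤ frobNorm (X l) ^ 2 / frobNorm (P * X l) ^ 2 := by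
      apply div_le_div_of_nonneg_left (sq_nonneg _) (pow_pos (hfrobPX_pos l) 2)
      exact pow_le_pow_left₀ (hfrobPX_pos l).le (hfrobPX_le_spec l) 2
    have step2 : frobNorm (X l) ^ 2 / frobNorm (P * X l) ^ 2 = 1 + r l ^ 2 := by
      rw [hpyth l, add_div, div_self (pow_ne_zero 2 (hfrobPX_pos l).ne'), hrdef]
      simp only [div_pow]
    exact step1.trans_eq step2
  have hubT : Filter.Tendsto (fun l => 1 + r l ^ 2) Filter.atTop (nhds 1) := by
    have h1 : Filter.Tendsto (fun l => r l ^ 2) Filter.atTop (nhds 0) := by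
      have := hrT.pow 2
      simpa using this
    have := Filter.Tendsto.add
      (tendsto_const_nhds : Filter.Tendsto (fun _ : ℕ => (1:ℝ)) Filter.atTop (nhds 1)) h1
    simpa using this
  exact tendsto_of_tendsto_of_tendsto_of_le_of_le tendsto_const_nhds hubT h1le hub
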